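/- Let P⁺ be a weighted set of probability measures on a finite state space S, and let E ⊆ S satisfy ᾱ(E) > 0. Then for any menu M, act h, and act f ∈ M, the maximum weighted expected regret of fEh with respect to the menu MEh = {gEh : g ∈ M} and P⁺ equals ᾱ(E) times the maximum weighted expected regret of f with respect to M and the updated weighted set P⁺|E. Consequently, for all f, g ∈ M, fEh ⪰_{MEh, P⁺} gEh if and only if f ⪰_{M, P⁺|E} g. -/

import Mathlib

open Finset

def IsProb {S : Type*} [Fintype S] (p : S → ℝ) : Prop :=
  (∀ s, 0 ≤ p s) ∧ ∑ s, p s = 1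

noncomputable def mass {S : Type*} [Fintype S] (p : S → ℝ) (E : Finset S) : ℝ :=
  ∑ s ∈ E, p s

noncomputable def condProb {S : Type*} [Fintype S] [DecidableEq S]
    (p : S → ℝ) (E : Finset S) : S → ℝ :=
  fun s => if s ∈ E then p s / mass p E else 0

/-- ᾱ(E) = sup over (Pr, α) ∈ P⁺ of α·Pr(E). -/
noncomputable def abar {S : Type*} [Fintype S]
    (P : Set ((S → ℝ) × ℝ)) (E : Finset S) : ℝ :=
  sSup {w | ∃ pa ∈ P, w = pa.2 * mass pa.1 E}

/-- Likelihood updating of a weighted set of probability measures on event `E`. -/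
noncomputable def lupdate {S : Type*} [Fintype S] [DecidableEq S]
    (P : Set ((S → ℝ) × ℝ)) (E : Finset S) : Set ((S → ℝ) × ℝ) :=
  {x | (∃ pa ∈ P, x.1 = condProb pa.1 E) ∧
       x.2 = sSup {w | ∃ qb ∈ P, condProb qb.1 E = x.1 ∧
                        w = qb.2 * mass qb.1 E / abar P E}}

/-- Best utility in state `s` among acts in the menu `M`. -/
noncomputable def best {S : Type*} [Fintype S] (M : Set (S → ℝ)) (s : S) : ℝ :=
  sSup ((fun g => g s) '' M)

/-- Maximum weighted expected regret of `f` w.r.t. menu `M` and weighted set `P`. -/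
noncomputable def wreg {S : Type*} [Fintype S]
    (P : Set ((S → ℝ) × ℝ)) (M : Set (S → ℝ)) (f : S → ℝ) : ℝ :=
  sSup {r | ∃ pa ∈ P, r = pa.2 * ∑ s, pa.1 s * (best M s - f s)}

/-- The act `fEh`, equal to `f` on `E` and to `h` off `E`. -/
def splice {S : Type*} [DecidableEq S] (f h : S → ℝ) (E : Finset S) : S → ℝ :=
  fun s => if s ∈ E then f s else h s

/-- `regret_{MEh,P⁺}(fEh) = ᾱ(E) · regret_{M,P⁺|E}(f)`, and consequently
`fEh ⪰_{MEh,P⁺} gEh` iff `f ⪰_{M,P⁺|E} g`. -/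
theorem wreg_splice_eq_abar_mul_wreg_update
    {S : Type*} [Fintype S] [DecidableEq S]
    (P : Set ((S → ℝ) × ℝ))
    (hP : ∀ pa ∈ P, IsProb pa.1 ∧ pa.2 ∈ Set.Icc (0:ℝ) 1)
    (E : Finset S) (hE : 0 < abar P E)
    (M : Set (S → ℝ)) (hbdd : ∀ s, BddAbove ((fun g => g s) '' M))
    (h : S → ℝ) :
    (∀ f ∈ M,
      wreg P ((fun g => splice g h E) '' M) (splice f h E) =
        abar P E * wreg (lupdate P E) M f) ∧
    (∀ f ∈ M, ∀ g ∈ M,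
      (wreg P ((fun g' => splice g' h E) '' M) (splice f h E) ≤
         wreg P ((fun g' => splice g' h E) '' M) (splice g h E) ↔
       wreg (lupdate P E) M f ≤ wreg (lupdate P E) M g)) := by
  have key : ∀ f ∈ M,
      wreg P ((fun g => splice g h E) '' M) (splice f h E) =
        abar P E * wreg (lupdate P E) M f := by
    intro f hf
    have hMne : M.Nonempty := ⟨f, hf⟩
    have hbf : ∀ s : S, f s ≤ best M s := fun s => le_csSup (hbdd s) ⟨f, hf, rfl⟩
    have hPne : P.Nonempty := by
      by_contra hemp
      rw [Set.not_nonempty_iff_eq_empty] at hemp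
      have h0 : abar P E = 0 := by
        have hset : {w | ∃ pa ∈ P, w = pa.2 * mass pa.1 E} = (∅ : Set ℝ) := by
          simp [hemp]
        rw [abar, hset, Real.sSup_empty]
      rw [h0] at hE; exact lt_irrefl 0 hE
    -- basic probability facts
    have hpnn : ∀ pa ∈ P, ∀ s : S, 0 ≤ pa.1 s := fun pa hpa => (hP pa hpa).1.1
    have hα0 : ∀ pa ∈ P, 0 ≤ pa.2 := fun pa hpa => (hP pa hpa).2.1
    have hα1 : ∀ pa ∈ P, pa.2 ≤ 1 := fun pa hpa => (hP pa hpa).2.2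
    have hm0 : ∀ pa ∈ P, 0 ≤ mass pa.1 E := fun pa hpa =>
      Finset.sum_nonneg fun s _ => hpnn pa hpa s
    have hm1 : ∀ pa ∈ P, mass pa.1 E ≤ 1 := by
      intro pa hpa
      calc mass pa.1 E ≤ ∑ s, pa.1 s :=
            Finset.sum_le_sum_of_subset_of_nonneg (Finset.subset_univ E)
              (fun s _ _ => hpnn pa hpa s)
        _ = 1 := (hP pa hpa).1.2
    have hps_le_m : ∀ pa ∈ P, ∀ s ∈ E, pa.1 s ≤ mass pa.1 E := fun pa hpa s hs =>
      Finset.single_le_sum (fun t _ => hpnn pa hpa t) hs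
    -- abbreviations
    set c : (S → ℝ) → ℝ := fun p => ∑ s ∈ E, p s * (best M s - f s) with hc
    have hcnn : ∀ pa ∈ P, 0 ≤ c pa.1 := fun pa hpa =>
      Finset.sum_nonneg fun s _ => mul_nonneg (hpnn pa hpa s) (sub_nonneg.2 (hbf s))
    set C : ℝ := ∑ s ∈ E, (best M s - f s) with hCdef
    have hC0 : 0 ≤ C := Finset.sum_nonneg fun s _ => sub_nonneg.2 (hbf s)
    have hcC : ∀ pa ∈ P, c pa.1 ≤ C := by
      intro pa hpa
      apply Finset.sum_le_sum
      intro s hs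
      have h1 : pa.1 s ≤ 1 := le_trans (hps_le_m pa hpa s hs) (hm1 pa hpa)
      calc pa.1 s * (best M s - f s) ≤ 1 * (best M s - f s) :=
            mul_le_mul_of_nonneg_right h1 (sub_nonneg.2 (hbf s))
        _ = best M s - f s := one_mul _
    -- the set A
    set A : Set ℝ := {r | ∃ pa ∈ P, r = pa.2 * c pa.1} with hA
    have hAne : A.Nonempty := by
      obtain ⟨pa, hpa⟩ := hPne
      exact ⟨pa.2 * c pa.1, pa, hpa, rfl⟩
    have hAub : ∀ r ∈ A, r ≤ C := by
      rintro r ⟨pa, hpa, rfl⟩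
      calc pa.2 * c pa.1 ≤ 1 * c pa.1 :=
            mul_le_mul_of_nonneg_right (hα1 pa hpa) (hcnn pa hpa)
        _ = c pa.1 := one_mul _
        _ ≤ C := hcC pa hpa
    have hAbdd : BddAbove A := ⟨C, hAub⟩
    have hA0 : 0 ≤ sSup A := by
      obtain ⟨pa, hpa⟩ := hPne
      have hnn : (0:ℝ) ≤ pa.2 * c pa.1 := mul_nonneg (hα0 pa hpa) (hcnn pa hpa)
      exact le_trans hnn (le_csSup hAbdd ⟨pa, hpa, rfl⟩)
    -- identity for conditional expectations
    have hT : ∀ p : S → ℝ,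
        (∑ s, condProb p E s * (best M s - f s)) = c p / mass p E := by
      intro p
      simp only [hc, condProb, ite_mul, zero_mul]
      rw [Finset.sum_ite_mem, Finset.univ_inter, Finset.sum_div]
      exact Finset.sum_congr rfl fun s _ => div_mul_eq_mul_div _ _ _
    have hmT : ∀ pa ∈ P, mass pa.1 E * (c pa.1 / mass pa.1 E) = c pa.1 := by
      intro pa hpa
      by_cases hm : mass pa.1 E = 0
      · have hz : c pa.1 = 0 := by
          apply Finset.sum_eq_zero
          intro s hs
          have hm' : ∑ s ∈ E, pa.1 s = 0 := hm
          have : pa.1 s = 0 :=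
            (Finset.sum_eq_zero_iff_of_nonneg (fun t _ => hpnn pa hpa t)).1 hm' s hs
          rw [this, zero_mul]
        rw [hz, hm]; ring
      · rw [mul_div_cancel₀ _ hm]
    have hq_nn : ∀ pa ∈ P, ∀ s : S, 0 ≤ condProb pa.1 E s := by
      intro pa hpa s
      unfold condProb
      split
      · exact div_nonneg (hpnn pa hpa s) (hm0 pa hpa)
      · exact le_refl 0
    have hTnn : ∀ pa ∈ P, 0 ≤ ∑ s, condProb pa.1 E s * (best M s - f s) := fun pa hpa =>
      Finset.sum_nonneg fun s _ => mul_nonneg (hq_nn pa hpa s) (sub_nonneg.2 (hbf s))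
    have hTC : ∀ pa ∈ P, (∑ s, condProb pa.1 E s * (best M s - f s)) ≤ C := by
      intro pa hpa
      rw [hT]
      by_cases hm : mass pa.1 E = 0
      · rw [hm, div_zero]; exact hC0
      · have hmpos : 0 < mass pa.1 E := lt_of_le_of_ne (hm0 pa hpa) (Ne.symm hm)
        rw [div_le_iff₀ hmpos]
        have hcmC : c pa.1 ≤ mass pa.1 E * C := by
          rw [hCdef, Finset.mul_sum]
          apply Finset.sum_le_sum
          intro s hs
          exact mul_le_mul_of_nonneg_right (hps_le_m pa hpa s hs) (sub_nonneg.2 (hbf s))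
        calc c pa.1 ≤ mass pa.1 E * C := hcmC
          _ = C * mass pa.1 E := mul_comm _ _
    -- the set D q (inner sup defining updated weights)
    set D : (S → ℝ) → Set ℝ := fun q =>
      {w | ∃ qb ∈ P, condProb qb.1 E = q ∧ w = qb.2 * mass qb.1 E / abar P E} with hD
    have hDub : ∀ q : S → ℝ, ∀ w ∈ D q, w ≤ 1 / abar P E := by
      rintro q w ⟨qb, hqb, -, rfl⟩
      have hnum : qb.2 * mass qb.1 E ≤ 1 := by
        nlinarith [hα0 qb hqb, hα1 qb hqb, hm0 qb hqb, hm1 qb hqb]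
      gcongr
    have hDbdd : ∀ q, BddAbove (D q) := fun q => ⟨1 / abar P E, hDub q⟩
    -- the set B
    set B : Set ℝ :=
      {r | ∃ qb ∈ lupdate P E, r = qb.2 * ∑ s, qb.1 s * (best M s - f s)} with hB
    -- facts about members of lupdate
    have hlup : ∀ qb ∈ lupdate P E, ∃ pa ∈ P, qb.1 = condProb pa.1 E ∧
        qb.2 = sSup (D qb.1) ∧ 0 ≤ qb.2 ∧ qb.2 ≤ 1 / abar P E ∧
        0 ≤ (∑ s, qb.1 s * (best M s - f s)) ∧
        (∑ s, qb.1 s * (best M s - f s)) ≤ C := by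
      rintro qb ⟨⟨pa, hpa, hq1⟩, hq2⟩
      have hq2' : qb.2 = sSup (D qb.1) := hq2
      have hw0 : pa.2 * mass pa.1 E / abar P E ∈ D qb.1 := ⟨pa, hpa, hq1.symm, rfl⟩
      have hDne : (D qb.1).Nonempty := ⟨_, hw0⟩
      have hw0nn : 0 ≤ pa.2 * mass pa.1 E / abar P E :=
        div_nonneg (mul_nonneg (hα0 pa hpa) (hm0 pa hpa)) hE.le
      refine ⟨pa, hpa, hq1, hq2', ?_, ?_, ?_, ?_⟩
      · rw [hq2']; exact le_trans hw0nn (le_csSup (hDbdd _) hw0)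
      · rw [hq2']; exact csSup_le hDne (hDub _)
      · rw [hq1]; exact hTnn pa hpa
      · rw [hq1]; exact hTC pa hpa
    have hBne : B.Nonempty := by
      obtain ⟨pa, hpa⟩ := hPne
      refine ⟨_, ⟨(condProb pa.1 E, sSup (D (condProb pa.1 E))), ⟨⟨pa, hpa, rfl⟩, rfl⟩, rfl⟩⟩
    have hBub : ∀ r ∈ B, r ≤ (1 / abar P E) * C := by
      rintro r ⟨qb, hqb, rfl⟩
      obtain ⟨pa, hpa, hq1, hq2, hβ0, hβ1, hT0, hTC'⟩ := hlup qb hqb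
      exact mul_le_mul hβ1 hTC' hT0 (by positivity)
    have hBbdd : BddAbove B := ⟨(1 / abar P E) * C, hBub⟩
    -- the two inequalities
    have hle1 : sSup A ≤ abar P E * sSup B := by
      apply csSup_le hAne
      rintro r ⟨pa, hpa, rfl⟩
      have hmem : ((condProb pa.1 E, sSup (D (condProb pa.1 E))) : (S → ℝ) × ℝ)
          ∈ lupdate P E := ⟨⟨pa, hpa, rfl⟩, rfl⟩
      set β := sSup (D (condProb pa.1 E)) with hβdef
      have hβge : pa.2 * mass pa.1 E / abar P E ≤ β :=
        le_csSup (hDbdd _) ⟨pa, hpa, rfl, rfl⟩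
      have h1 : pa.2 * mass pa.1 E ≤ abar P E * β := by
        rw [div_le_iff₀ hE] at hβge
        linarith
      have hTq : (∑ s, condProb pa.1 E s * (best M s - f s)) = c pa.1 / mass pa.1 E :=
        hT pa.1
      have hTqnn : 0 ≤ ∑ s, condProb pa.1 E s * (best M s - f s) := hTnn pa hpa
      have helem : β * (∑ s, condProb pa.1 E s * (best M s - f s)) ∈ B :=
        ⟨(condProb pa.1 E, β), hmem, rfl⟩
      calc pa.2 * c pa.1
          = pa.2 * (mass pa.1 E * (c pa.1 / mass pa.1 E)) := by rw [hmT pa hpa]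
        _ = (pa.2 * mass pa.1 E) * (c pa.1 / mass pa.1 E) := by ring
        _ = (pa.2 * mass pa.1 E) * (∑ s, condProb pa.1 E s * (best M s - f s)) := by
            rw [hTq]
        _ ≤ (abar P E * β) * (∑ s, condProb pa.1 E s * (best M s - f s)) :=
            mul_le_mul_of_nonneg_right h1 hTqnn
        _ = abar P E * (β * (∑ s, condProb pa.1 E s * (best M s - f s))) := by ring
        _ ≤ abar P E * sSup B :=
            mul_le_mul_of_nonneg_left (le_csSup hBbdd helem) hE.le
    have hle2 : abar P E * sSup B ≤ sSup A := by
      have hB_le : sSup B ≤ sSup A / abar P E := by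
        apply csSup_le hBne
        rintro r ⟨qb, hqb, rfl⟩
        obtain ⟨pa, hpa, hq1, hq2, hβ0, hβ1, hT0, hTC'⟩ := hlup qb hqb
        by_cases hTz : (∑ s, qb.1 s * (best M s - f s)) = 0
        · rw [hTz, mul_zero]
          exact div_nonneg hA0 hE.le
        · have hTpos : 0 < ∑ s, qb.1 s * (best M s - f s) :=
            lt_of_le_of_ne hT0 (Ne.symm hTz)
          have hDne : (D qb.1).Nonempty := ⟨_, pa, hpa, hq1.symm, rfl⟩
          have hβle : qb.2 ≤ sSup A / (abar P E * (∑ s, qb.1 s * (best M s - f s))) := by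
            rw [hq2]
            apply csSup_le hDne
            rintro w ⟨qb', hqb', hq', rfl⟩
            have hkey : qb'.2 * mass qb'.1 E * (∑ s, qb.1 s * (best M s - f s))
                ≤ sSup A := by
              have hTq' : (∑ s, qb.1 s * (best M s - f s)) = c qb'.1 / mass qb'.1 E := by
                rw [← hq']; exact hT qb'.1
              have hcanc : qb'.2 * mass qb'.1 E * (c qb'.1 / mass qb'.1 E)
                  = qb'.2 * c qb'.1 := by
                rw [mul_assoc, hmT qb' hqb']
              rw [hTq', hcanc]
              exact le_csSup hAbdd ⟨qb', hqb', rfl⟩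
            rw [div_le_div_iff₀ hE (mul_pos hE hTpos)]
            calc qb'.2 * mass qb'.1 E * (abar P E * (∑ s, qb.1 s * (best M s - f s)))
                = abar P E * (qb'.2 * mass qb'.1 E * (∑ s, qb.1 s * (best M s - f s))) := by
                  ring
              _ ≤ abar P E * sSup A := mul_le_mul_of_nonneg_left hkey hE.le
              _ = sSup A * abar P E := mul_comm _ _
          calc qb.2 * (∑ s, qb.1 s * (best M s - f s))
              ≤ (sSup A / (abar P E * (∑ s, qb.1 s * (best M s - f s)))) *
                  (∑ s, qb.1 s * (best M s - f s)) :=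
                mul_le_mul_of_nonneg_right hβle hT0
            _ = sSup A / abar P E := by
                field_simp
      calc abar P E * sSup B ≤ abar P E * (sSup A / abar P E) :=
            mul_le_mul_of_nonneg_left hB_le hE.le
        _ = sSup A := by field_simp
    -- identify the two wreg quantities
    have hbest : ∀ s : S, best ((fun g => splice g h E) '' M) s =
        if s ∈ E then best M s else h s := by
      intro s
      unfold best
      rw [Set.image_image]
      by_cases hs : s ∈ E
      · rw [if_pos hs]
        have himg : (fun g => splice g h E s) '' M = (fun g => g s) '' M :=
          Set.image_congr fun g _ => by simp [splice, hs]
        rw [himg]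
      · rw [if_neg hs]
        have himg : (fun g => splice g h E s) '' M = (fun _ => h s) '' M :=
          Set.image_congr fun g _ => by simp [splice, hs]
        rw [himg, Set.Nonempty.image_const hMne, csSup_singleton]
    have hsum : ∀ p : S → ℝ,
        (∑ s, p s * (best ((fun g => splice g h E) '' M) s - splice f h E s)) = c p := by
      intro p
      have hterm : ∀ s : S,
          p s * (best ((fun g => splice g h E) '' M) s - splice f h E s) =
          if s ∈ E then p s * (best M s - f s) else 0 := by
        intro s
        rw [hbest s]
        by_cases hs : s ∈ E <;> simp [splice, hs]
      rw [Finset.sum_congr rfl (fun s _ => hterm s), Finset.sum_ite_mem,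
        Finset.univ_inter]
    have hwA : wreg P ((fun g => splice g h E) '' M) (splice f h E) = sSup A := by
      unfold wreg
      congr 1
      ext r
      constructor
      · rintro ⟨pa, hpa, rfl⟩
        exact ⟨pa, hpa, by rw [hsum pa.1]⟩
      · rintro ⟨pa, hpa, rfl⟩
        exact ⟨pa, hpa, by rw [hsum pa.1]⟩
    have hwB : wreg (lupdate P E) M f = sSup B := rfl
    rw [hwA, hwB]
    exact le_antisymm hle1 hle2
  refine ⟨key, ?_⟩
  intro f hf g hg
  rw [key f hf, key g hg]
  exact mul_le_mul_iff_right₀ hE
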